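/- For each v > 0 there exists a unique v' > 0 solving v = (cosh(v') − 1)/v', and the function u(t,x) := exp(v'(v·t − x)) is a traveling-wave solution of the discrete heat equation ∂_t u(t,x) = (1/2)(u(t,x+1) + u(t,x−1) − 2u(t,x)) for all t ∈ ℝ and x ∈ ℤ. -/

import Mathlib

open Real

lemma g_neg (v : ℝ) (hv : 0 < v) :
    Real.cosh (min v (1/2)) - 1 < v * (min v (1/2)) := by
  set a := min v (1/2) with ha
  have ha0 : 0 < a := lt_min hv (by norm_num)
  have ha1 : a ≤ 1/2 := min_le_right _ _
  have hav : a ≤ v := min_le_left _ _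
  have hea : (0:ℝ) < Real.exp a := Real.exp_pos a
  have hE1 : Real.exp a * (Real.exp a)⁻¹ = 1 := mul_inv_cancel₀ hea.ne'
  have h1 : Real.exp a - 1 < a * Real.exp a := by
    have hne := Real.add_one_lt_exp (neg_ne_zero.2 ha0.ne')
    rw [Real.exp_neg] at hne
    nlinarith [mul_lt_mul_of_pos_right hne hea]
  have h2 : Real.exp a < 2 := by
    have h3 : Real.exp a ≤ Real.exp (1/2) := Real.exp_le_exp.2 ha1
    have h4 : Real.exp (1/2) * Real.exp (1/2) = Real.exp 1 := by
      rw [← Real.exp_add]; norm_num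
    nlinarith [Real.exp_one_lt_d9, Real.exp_pos (1/2 : ℝ)]
  have hgt : 1 < Real.exp a := Real.one_lt_exp_iff.2 ha0
  have key : (Real.exp a - 1)^2 < 2 * v * a * Real.exp a := by
    nlinarith [mul_pos ha0 hea, mul_lt_mul_of_pos_left h2 (mul_pos ha0 hea)]
  rw [Real.cosh_eq, Real.exp_neg]
  nlinarith [mul_lt_mul_of_pos_right key (inv_pos.2 hea), sq_nonneg (Real.exp a - 1)]

lemma g_pos (v : ℝ) (hv : 0 < v) :
    v * (8*v+8) < Real.cosh (8*v+8) - 1 := by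
  set b := 8*v+8 with hb
  have hb0 : (0:ℝ) < b := by positivity
  have h1 : (1 + b/2) ≤ Real.exp (b/2) := by
    have := Real.add_one_le_exp (b/2); linarith
  have h2 : (1 + b/2)^2 ≤ Real.exp b := by
    have : Real.exp (b/2) * Real.exp (b/2) = Real.exp b := by
      rw [← Real.exp_add]; ring_nf
    nlinarith [Real.exp_pos (b/2)]
  have h3 : Real.exp b / 2 ≤ Real.cosh b := by
    rw [Real.cosh_eq]
    have := (Real.exp_pos (-b)).le
    linarith
  have : (1 + b/2)^2 / 2 ≤ Real.cosh b := by linarith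
  nlinarith [hv, sq_nonneg v]

lemma g_strictConvex (v : ℝ) : StrictConvexOn ℝ Set.univ (fun x : ℝ => Real.cosh x - v * x) := by
  apply strictConvexOn_of_deriv2_pos convex_univ
  · exact (Real.continuous_cosh.sub (continuous_const.mul continuous_id)).continuousOn
  · intro x _
    have h1 : deriv (fun x : ℝ => Real.cosh x - v * x) = fun x => Real.sinh x - v := by
      ext y
      have : HasDerivAt (fun x : ℝ => Real.cosh x - v * x) (Real.sinh y - v) y := by
        have h := (Real.hasDerivAt_cosh y).sub ((hasDerivAt_id' y).const_mul v)
        rwa [mul_one] at h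
      exact this.deriv
    have h2 : deriv^[2] (fun x : ℝ => Real.cosh x - v * x) x = Real.cosh x := by
      rw [Function.iterate_succ, Function.iterate_one, Function.comp_apply, h1]
      have : HasDerivAt (fun y : ℝ => Real.sinh y - v) (Real.cosh x) x := by
        simpa using (Real.hasDerivAt_sinh x).sub_const v
      exact this.deriv
    rw [h2]; exact Real.cosh_pos x

-- two positive roots coincide
lemma root_unique (v : ℝ) {w₁ w₂ : ℝ} (h1 : 0 < w₁) (h2 : 0 < w₂)
    (e1 : Real.cosh w₁ - 1 = v * w₁) (e2 : Real.cosh w₂ - 1 = v * w₂) : w₁ = w₂ := by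
  by_contra hne
  -- wlog w₁ < w₂
  wlog hlt : w₁ < w₂ generalizing w₁ w₂
  · exact this h2 h1 e2 e1 (Ne.symm hne) (lt_of_le_of_ne (not_lt.1 hlt) (Ne.symm hne))
  have hsc := g_strictConvex v
  have hne0 : (0:ℝ) ≠ w₂ := by linarith
  have hapos : (0:ℝ) < 1 - w₁/w₂ := by
    have : w₁/w₂ < 1 := (div_lt_one h2).2 hlt
    linarith
  have hbpos : (0:ℝ) < w₁/w₂ := by positivity
  have hsum : (1 - w₁/w₂) + w₁/w₂ = 1 := by ring
  have hcomb := hsc.2 (Set.mem_univ (0:ℝ)) (Set.mem_univ w₂) hne0 hapos hbpos hsum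
  simp only [smul_eq_mul, mul_zero, zero_add] at hcomb
  have hx : w₁/w₂ * w₂ = w₁ := div_mul_cancel₀ _ h2.ne'
  rw [hx] at hcomb
  have e2' : Real.cosh w₂ - v * w₂ = 1 := by linarith
  rw [e2'] at hcomb
  simp only [Real.cosh_zero, sub_zero, mul_one] at hcomb
  linarith

theorem stmt9 (v : ℝ) (hv : 0 < v) :
    (∃! w : ℝ, 0 < w ∧ v = (Real.cosh w - 1) / w) ∧
    ∀ w : ℝ, 0 < w → v = (Real.cosh w - 1) / w →
      ∀ (t : ℝ) (x : ℤ),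
        HasDerivAt (fun s : ℝ => Real.exp (w * (v * s - (x : ℝ))))
          ((1/2) * (Real.exp (w * (v * t - ((x + 1 : ℤ) : ℝ)))
            + Real.exp (w * (v * t - ((x - 1 : ℤ) : ℝ)))
            - 2 * Real.exp (w * (v * t - (x : ℝ))))) t := by
  constructor
  · -- existence and uniqueness
    set a := min v (1/2) with ha
    set b := 8*v+8 with hb
    have ha0 : 0 < a := lt_min hv (by norm_num)
    have hab : a ≤ b := by
      have : a ≤ 1/2 := min_le_right _ _
      nlinarith
    have hcont : ContinuousOn (fun x : ℝ => Real.cosh x - 1 - v * x) (Set.Icc a b) :=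
      (Real.continuous_cosh.sub continuous_const |>.sub
        (continuous_const.mul continuous_id)).continuousOn
    have hga : Real.cosh a - 1 - v * a < 0 := by rw [ha]; have := g_neg v hv; linarith
    have hgb : 0 < Real.cosh b - 1 - v * b := by rw [hb]; have := g_pos v hv; linarith
    obtain ⟨c, hcmem, hc⟩ := intermediate_value_Ioo hab hcont ⟨hga, hgb⟩
    have hc0 : 0 < c := lt_trans ha0 hcmem.1
    have hceq : Real.cosh c - 1 = v * c := by
      have : Real.cosh c - 1 - v * c = 0 := hc
      linarith
    refine ⟨c, ⟨hc0, ?_⟩, ?_⟩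
    · rw [eq_div_iff hc0.ne']; linarith [hceq]
    · rintro w ⟨hw0, hweq⟩
      have hweq' : Real.cosh w - 1 = v * w := by
        rw [eq_div_iff hw0.ne'] at hweq; linarith
      exact root_unique v hw0 hc0 hweq' hceq
  · intro w hw0 hweq t x
    have hweq' : Real.cosh w - 1 = v * w := by
      rw [eq_div_iff hw0.ne'] at hweq; linarith
    have hder : HasDerivAt (fun s : ℝ => Real.exp (w * (v * s - (x : ℝ))))
        ((w * v) * Real.exp (w * (v * t - (x : ℝ)))) t := by
      have hinner : HasDerivAt (fun s : ℝ => w * (v * s - (x : ℝ))) (w * v) t := by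
        simpa using (((hasDerivAt_id t).const_mul v).sub_const ((x:ℝ))).const_mul w
      simpa [mul_comm] using hinner.exp
    convert hder using 1
    have e1 : w * (v * t - ((x + 1 : ℤ) : ℝ)) = w * (v * t - (x:ℝ)) + (-w) := by
      push_cast; ring
    have e2 : w * (v * t - ((x - 1 : ℤ) : ℝ)) = w * (v * t - (x:ℝ)) + w := by
      push_cast; ring
    rw [e1, e2, Real.exp_add, Real.exp_add]
    have hc : Real.exp w + Real.exp (-w) = 2 + 2 * (v * w) := by
      have := Real.cosh_eq w
      nlinarith [hweq']
    nlinarith [hc, Real.exp_pos (w * (v * t - (x:ℝ)))]
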